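/- For c > 0, the function f(λ) = (1/λ)(c - ln(1-λ)) on (0,1) attains its global minimum at λ* = 1 + 1/W₋₁(-e^{-(c+1)}), and the minimum value equals W·(c + ln(-W))/(1 + W), where W = W₋₁(-e^{-(c+1)}). -/

import Mathlib

/-- For c > 0, f(λ) = (1/λ)(c - ln(1-λ)) on (0,1) attains its global minimum at
λ* = 1 + 1/W, with minimum value W·(c + ln(-W))/(1 + W), where W = W₋₁(-e^{-(c+1)}),
characterized as the real number W ≤ -1 with W·e^W = -e^{-(c+1)}. -/
theorem stmt_8 (c W : ℝ) (hc : 0 < c) (hW : W ≤ -1)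
    (hWeq : W * Real.exp W = -Real.exp (-(c + 1))) :
    (1 + 1 / W ∈ Set.Ioo (0:ℝ) 1) ∧
    (∀ l ∈ Set.Ioo (0:ℝ) 1,
      (1 / (1 + 1 / W)) * (c - Real.log (1 - (1 + 1 / W))) ≤
        (1 / l) * (c - Real.log (1 - l))) ∧
    (1 / (1 + 1 / W)) * (c - Real.log (1 - (1 + 1 / W))) =
      W * (c + Real.log (-W)) / (1 + W) := by
  have hWlt : W < -1 := by
    rcases lt_or_eq_of_le hW with h | h
    · exact h
    · exfalso
      rw [h] at hWeq
      have h1 : Real.exp (-1) = Real.exp (-(c + 1)) := by nlinarith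
      have := Real.exp_injective h1
      linarith
  have hWneg : W < 0 := by linarith
  have hW0 : W ≠ 0 := ne_of_lt hWneg
  have hW1 : 1 + W < 0 := by linarith
  have hW1' : 1 + W ≠ 0 := ne_of_lt hW1
  have hexp : -W = Real.exp (-(c + 1) - W) := by
    rw [Real.exp_sub]
    rw [eq_div_iff (Real.exp_pos W).ne']
    linarith
  have hlog : Real.log (-W) = -(c + 1) - W := by rw [hexp, Real.log_exp]
  have hlam : 0 < 1 + 1 / W := by
    have h1 : W * (1 + 1 / W) = W + 1 := by field_simp
    nlinarith
  have hlam1 : 1 + 1 / W < 1 := by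
    have : 1 / W < 0 := one_div_neg.mpr hWneg
    linarith
  have hsub : 1 - (1 + 1 / W) = (-W)⁻¹ := by
    rw [inv_neg]
    field_simp
    ring
  have fval : (1 / (1 + 1 / W)) * (c - Real.log (1 - (1 + 1 / W))) = -W := by
    rw [hsub, Real.log_inv, hlog]
    field_simp
    linear_combination (-1) * mul_inv_cancel₀ hW1'
  refine ⟨⟨hlam, hlam1⟩, ?_, ?_⟩
  · intro l hl
    have hl0 : 0 < l := hl.1
    have hl1 : 0 < 1 - l := by linarith [hl.2]
    have hWpos : 0 < -W := by linarith
    have key : Real.log ((1 - l) * (-W)) ≤ (1 - l) * (-W) - 1 :=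
      Real.log_le_sub_one_of_pos (by positivity)
    have hlogprod : Real.log ((1 - l) * (-W)) = Real.log (1 - l) + Real.log (-W) :=
      Real.log_mul (ne_of_gt hl1) (ne_of_gt hWpos)
    have hub : Real.log (1 - l) ≤ c + W * l := by
      rw [hlogprod, hlog] at key
      nlinarith
    have h3 : -W ≤ (c - Real.log (1 - l)) / l := by
      rw [le_div_iff₀ hl0]
      nlinarith
    rw [fval, one_div, inv_mul_eq_div]
    exact h3
  · rw [fval, hlog]
    field_simp
    ring
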